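/- Let n ≥ 1, let p be a real number, and let f : ℝⁿ → ℝ be f(x) = e^{‖x‖²}. Then for every x ∈ ℝⁿ with x ≠ 0, writing r = ‖x‖, the divergence of the vector field V(y) = ‖∇f(y)‖^{p-2} ∇f(y) at x equals (n + p − 2 + 2(p−1)r²) · 2^{p−1} · e^{(p−1)r²} · r^{p−2}. (The explicit computation in Counter-Example 3.1.) -/

import Mathlib

open scoped RealInnerProductSpace
open MeasureTheory Filter Metric Real

private lemma rpow_half_sq {a : ℝ} (ha : 0 ≤ a) (p : ℝ) :
    ((a ^ 2 : ℝ)) ^ ((p - 2) / 2) = a ^ (p - 2) := by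
  rw [← Real.rpow_natCast a 2, ← Real.rpow_mul ha]
  norm_num
  ring_nf

/-- the explicit computation in Counter-Example 3.1.
For `f(x) = e^{‖x‖²}` on `ℝⁿ` and `V = ‖∇f‖^(p-2) ∇f`, at every `x ≠ 0` with
`r = ‖x‖` the divergence of `V` (the trace of its Fréchet derivative) equals
`(n + p − 2 + 2(p−1)r²) · 2^(p−1) · e^{(p−1)r²} · r^(p−2)`. -/
theorem divergence_of_pLaplace_field_of_exp_norm_sq
    (n : ℕ) (hn : 1 ≤ n) (p : ℝ)
    (f : EuclideanSpace ℝ (Fin n) → ℝ)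
    (hf : f = fun x => Real.exp (‖x‖ ^ 2))
    (V : EuclideanSpace ℝ (Fin n) → EuclideanSpace ℝ (Fin n))
    (hV : V = fun y => ‖gradient f y‖ ^ (p - 2) • gradient f y)
    (x : EuclideanSpace ℝ (Fin n)) (hx : x ≠ 0) :
    ∑ i : Fin n,
        ⟪fderiv ℝ V x (EuclideanSpace.single i 1), EuclideanSpace.single i 1⟫
      = ((n : ℝ) + p - 2 + 2 * (p - 1) * ‖x‖ ^ 2) * 2 ^ (p - 1) *
          Real.exp ((p - 1) * ‖x‖ ^ 2) * ‖x‖ ^ (p - 2) := by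
  -- the gradient of f
  have hgrad : ∀ y : EuclideanSpace ℝ (Fin n),
      gradient f y = (2 * Real.exp (‖y‖ ^ 2)) • y := by
    intro y
    subst hf
    refine HasGradientAt.gradient ?_
    rw [hasGradientAt_iff_hasFDerivAt]
    have h1 := (hasFDerivAt_id (𝕜 := ℝ) y).norm_sq.exp
    refine h1.congr_fderiv ?_
    ext h
    simp [InnerProductSpace.toDual_apply_apply, real_inner_smul_left, two_smul, real_inner_comm]
    ring
  -- the scalar coefficient, expressed through the squared norm
  set φ : ℝ → ℝ := fun t => 2 ^ (p - 1) * (Real.exp ((p - 1) * t) * t ^ ((p - 2) / 2)) with hφdef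
  have hVc : V = fun y => φ (‖y‖ ^ 2) • y := by
    funext y
    rw [hV]
    simp only [hgrad y]
    rcases eq_or_ne y 0 with rfl | hy
    · simp
    · have hr : (0:ℝ) < ‖y‖ := norm_pos_iff.mpr hy
      have hE : (0:ℝ) < 2 * Real.exp (‖y‖ ^ 2) := by positivity
      rw [norm_smul, smul_smul, Real.norm_eq_abs, abs_of_pos hE]
      congr 1
      rw [Real.mul_rpow hE.le hr.le, mul_right_comm, ← Real.rpow_add_one hE.ne',
        (by ring : p - 2 + 1 = p - 1),
        Real.mul_rpow (by norm_num) (Real.exp_pos _).le, ← Real.exp_mul,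
        mul_comm (‖y‖ ^ 2)]
      simp only [hφdef]
      rw [rpow_half_sq (norm_nonneg y)]
      ring
  -- derivative data
  have hr : (0:ℝ) < ‖x‖ := norm_pos_iff.mpr hx
  have hs : (0:ℝ) < ‖x‖ ^ 2 := by positivity
  set s := ‖x‖ ^ 2 with hsdef
  set D : ℝ := 2 ^ (p - 1) * ((p - 1) * Real.exp ((p - 1) * s) * s ^ ((p - 2) / 2)
      + Real.exp ((p - 1) * s) * (((p - 2) / 2) * s ^ ((p - 2) / 2 - 1))) with hDdef
  have hφ : HasDerivAt φ D s := by
    have h1 : HasDerivAt (fun t : ℝ => Real.exp ((p - 1) * t))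
        ((p - 1) * Real.exp ((p - 1) * s)) s := by
      simpa [mul_comm] using ((hasDerivAt_id s).const_mul (p - 1)).exp
    have h2 : HasDerivAt (fun t : ℝ => t ^ ((p - 2) / 2))
        (((p - 2) / 2) * s ^ ((p - 2) / 2 - 1)) s :=
      Real.hasDerivAt_rpow_const (Or.inl hs.ne')
    simpa [hDdef, mul_add] using (h1.mul h2).const_mul ((2:ℝ) ^ (p - 1))
  have hq : HasFDerivAt (fun y : EuclideanSpace ℝ (Fin n) => ‖y‖ ^ 2)
      (2 • innerSL ℝ x) x := by
    simpa using (hasFDerivAt_id (𝕜 := ℝ) x).norm_sq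
  have hc : HasFDerivAt (fun y : EuclideanSpace ℝ (Fin n) => φ (‖y‖ ^ 2))
      (D • (2 • innerSL ℝ x)) x := hφ.comp_hasFDerivAt (h₂ := φ) (f := fun y : EuclideanSpace ℝ (Fin n) => ‖y‖ ^ 2) x hq
  have hVder : HasFDerivAt V
      (φ s • ContinuousLinearMap.id ℝ (EuclideanSpace ℝ (Fin n))
        + (D • (2 • innerSL ℝ x)).smulRight x) x := by
    rw [hVc]
    exact hc.smul (hasFDerivAt_id (𝕜 := ℝ) x)
  rw [hVder.fderiv]
  have hsum : ∀ i : Fin n,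
      ⟪(φ s • ContinuousLinearMap.id ℝ (EuclideanSpace ℝ (Fin n))
        + (D • (2 • innerSL ℝ x)).smulRight x) (EuclideanSpace.single i 1),
        EuclideanSpace.single i 1⟫
      = φ s + 2 * D * (x i * x i) := by
    intro i
    simp [inner_add_left, real_inner_smul_left, EuclideanSpace.inner_single_left,
      EuclideanSpace.inner_single_right, real_inner_comm]
    ring
  rw [Finset.sum_congr rfl fun i _ => hsum i]
  rw [Finset.sum_add_distrib, Finset.sum_const, ← Finset.mul_sum]
  have hxx : ∑ i : Fin n, x i * x i = s := by
    rw [hsdef, ← real_inner_self_eq_norm_sq]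
    simp only [PiLp.inner_apply, RCLike.inner_apply, conj_trivial]
  rw [hxx]
  -- final algebra
  have h1 : s ^ ((p - 2) / 2) = ‖x‖ ^ (p - 2) := rpow_half_sq (norm_nonneg x) p
  have h2 : s ^ ((p - 2) / 2 - 1) = s ^ ((p - 2) / 2) / s := Real.rpow_sub_one hs.ne' _
  simp only [Finset.card_univ, Fintype.card_fin, nsmul_eq_mul, hφdef, hDdef, h2, h1]
  field_simp
  ring
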